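/- Let N ≥ 7 and F(σ) = |σ|^{4/(N−2)}σ. There is a constant C = C(N) such that for all reals a ≠ 0, b, c: |F(a+b+c) − F(a+b) − F(a+c) + F(a)| ≤ C |a|^{(6−N)/(2(N−2))} |b|^{(N+2)/(2(N−2))} |c|. -/

import Mathlib

open Real

open Set


noncomputable def Gp (p : ℝ) (s : ℝ) : ℝ := |s| ^ p * s

lemma add_rpow_le {p x y : ℝ} (hx : 0 ≤ x) (hy : 0 ≤ y) (hp : 0 ≤ p) (hp1 : p ≤ 1) :
    (x + y) ^ p ≤ x ^ p + y ^ p := by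
  have h := NNReal.rpow_add_le_add_rpow x.toNNReal y.toNNReal hp hp1
  rw [← NNReal.coe_le_coe] at h
  push_cast [NNReal.coe_rpow, Real.coe_toNNReal _ hx, Real.coe_toNNReal _ hy] at h
  exact h

lemma abs_rpow_sub_abs_rpow {p : ℝ} (hp0 : 0 < p) (hp1 : p ≤ 1) (u v : ℝ) :
    |(|u| ^ p - |v| ^ p)| ≤ |u - v| ^ p := by
  have key : ∀ u v : ℝ, |u| ^ p - |v| ^ p ≤ |u - v| ^ p := by
    intro u v
    have h1 : |u| ≤ |v| + |u - v| := by
      calc |u| = |v + (u - v)| := by ring_nf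
      _ ≤ |v| + |u - v| := abs_add_le _ _
    have h2 : |u| ^ p ≤ (|v| + |u - v|) ^ p :=
      Real.rpow_le_rpow (abs_nonneg _) h1 hp0.le
    have h3 := add_rpow_le (abs_nonneg v) (abs_nonneg (u - v)) hp0.le hp1
    linarith
  have h1 := key u v
  have h2 := key v u
  rw [abs_sub_comm v u] at h2
  rw [abs_le]
  constructor <;> linarith

lemma mvt_bound {g g' : ℝ → ℝ} {u v C : ℝ}
    (hg : ∀ x ∈ uIcc u v, HasDerivAt g (g' x) x)
    (hC : ∀ x ∈ uIcc u v, |g' x| ≤ C) :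
    |g v - g u| ≤ C * |v - u| := by
  have := (convex_uIcc u v).norm_image_sub_le_of_norm_hasDerivWithin_le
    (f := g) (f' := g') (fun x hx => (hg x hx).hasDerivWithinAt)
    (fun x hx => by simpa using hC x hx) left_mem_uIcc right_mem_uIcc
  simpa using this

lemma hasDerivAt_G {p : ℝ} (hp : 0 < p) (s : ℝ) :
    HasDerivAt (fun x : ℝ => |x| ^ p * x) ((p + 1) * |s| ^ p) s := by
  rcases lt_trichotomy s 0 with hs | hs | hs
  · have hne : (-s : ℝ) ≠ 0 := by linarith
    have h1 : HasDerivAt (fun x : ℝ => (-x) ^ (p + 1)) ((p + 1) * (-s) ^ p * (-1)) s := by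
      have h0 : HasDerivAt (fun y : ℝ => y ^ (p + 1)) ((p + 1) * (-s) ^ (p + 1 - 1)) (-s) :=
        Real.hasDerivAt_rpow_const (Or.inl hne)
      have hneg : HasDerivAt (fun x : ℝ => -x) (-1 : ℝ) s := (hasDerivAt_id s).neg
      simpa [add_sub_cancel_right, Function.comp_def] using h0.comp s hneg
    have h2 : HasDerivAt (fun x : ℝ => -((-x) ^ (p + 1))) ((p + 1) * (-s) ^ p) s := by
      have : HasDerivAt (fun x : ℝ => -((-x) ^ (p + 1))) (-((p + 1) * (-s) ^ p * (-1))) s := h1.neg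
      convert this using 1
      ring
    refine h2.congr_of_eventuallyEq ?_ |>.congr_deriv ?_
    · filter_upwards [eventually_lt_nhds hs] with x hx
      have : |x| = -x := abs_of_neg hx
      rw [this, Real.rpow_add_one (by linarith : (-x : ℝ) ≠ 0)]
      ring
    · rw [abs_of_neg hs]
  · subst hs
    rw [hasDerivAt_iff_tendsto_slope]
    have hslope : ∀ x : ℝ, x ≠ 0 → slope (fun x : ℝ => |x| ^ p * x) 0 x = |x| ^ p := by
      intro x hx
      simp [slope, hp.ne', Real.zero_rpow hp.ne', div_eq_iff hx]
      field_simp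
    have htends : Filter.Tendsto (fun x : ℝ => |x| ^ p) (nhdsWithin 0 {(0:ℝ)}ᶜ)
        (nhds ((p+1) * |(0:ℝ)| ^ p)) := by
      rw [abs_zero, Real.zero_rpow hp.ne', mul_zero]
      have hcont : Filter.Tendsto (fun x : ℝ => |x| ^ p) (nhds 0) (nhds 0) := by
        have h1 : Filter.Tendsto (fun x : ℝ => |x|) (nhds (0:ℝ)) (nhds 0) := by
          simpa using continuous_abs.tendsto (0:ℝ)
        have h2 : Filter.Tendsto (fun y : ℝ => y ^ p) (nhds 0) (nhds 0) := by
          have := (Real.continuousAt_rpow_const 0 p (Or.inr hp.le)).tendsto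
          simpa [Real.zero_rpow hp.ne'] using this
        exact h2.comp h1
      exact hcont.mono_left nhdsWithin_le_nhds
    refine htends.congr' ?_
    filter_upwards [self_mem_nhdsWithin] with x hx
    exact (hslope x hx).symm
  · have hne : (s : ℝ) ≠ 0 := hs.ne'
    have h0 : HasDerivAt (fun y : ℝ => y ^ (p + 1)) ((p + 1) * s ^ p) s := by
      simpa [add_sub_cancel_right] using
        Real.hasDerivAt_rpow_const (x := s) (p := p + 1) (Or.inl hne)
    refine h0.congr_of_eventuallyEq ?_ |>.congr_deriv ?_
    · filter_upwards [eventually_gt_nhds hs] with x hx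
      rw [abs_of_pos hx, Real.rpow_add_one hx.ne']
    · rw [abs_of_pos hs]

lemma lip_fprime {p : ℝ} (hp0 : 0 < p) (hp1 : p ≤ 1) {x y : ℝ}
    (hx : x ∈ Icc (2/5 : ℝ) (8/5)) (hy : y ∈ Icc (2/5 : ℝ) (8/5)) :
    |(p+1) * |x| ^ p - (p+1) * |y| ^ p| ≤ 8 * |x - y| := by
  have hsub : uIcc x y ⊆ Icc (2/5 : ℝ) (8/5) := by
    have h := Set.uIcc_subset_uIcc (a₁ := x) (b₁ := y)
      (by rw [Set.uIcc_of_le (by norm_num : (2/5:ℝ) ≤ 8/5)]; exact hx)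
      (by rw [Set.uIcc_of_le (by norm_num : (2/5:ℝ) ≤ 8/5)]; exact hy)
    rwa [Set.uIcc_of_le (by norm_num : (2/5:ℝ) ≤ 8/5)] at h
  have hder : ∀ z ∈ uIcc y x, HasDerivAt (fun z : ℝ => (p+1) * |z| ^ p)
      ((fun z : ℝ => (p+1) * (p * z ^ (p-1))) z) z := by
    intro z hz
    rw [Set.uIcc_comm] at hz
    obtain ⟨hz1, hz2⟩ := hsub hz
    have hz0 : (0:ℝ) < z := by linarith
    have h0 : HasDerivAt (fun w : ℝ => (p+1) * w ^ p) ((p+1) * (p * z ^ (p-1))) z :=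
      (Real.hasDerivAt_rpow_const (Or.inl hz0.ne')).const_mul (p+1)
    refine h0.congr_of_eventuallyEq ?_
    filter_upwards [eventually_gt_nhds hz0] with w hw
    rw [abs_of_pos hw]
  have hbd : ∀ z ∈ uIcc y x, |(fun z : ℝ => (p+1) * (p * z ^ (p-1))) z| ≤ 8 := by
    intro z hz
    rw [Set.uIcc_comm] at hz
    obtain ⟨hz1, hz2⟩ := hsub hz
    have hz0 : (0:ℝ) < z := by linarith
    have e2 : z ^ p ≤ 8/5 := by
      calc z ^ p ≤ (8/5 : ℝ) ^ p := Real.rpow_le_rpow hz0.le hz2 hp0.le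
      _ ≤ (8/5 : ℝ) ^ (1:ℝ) := Real.rpow_le_rpow_of_exponent_le (by norm_num) hp1
      _ = 8/5 := Real.rpow_one _
    have e3 : z ^ (p-1) ≤ 4 := by
      rw [Real.rpow_sub hz0, Real.rpow_one, div_le_iff₀ hz0]
      linarith
    have hpos : 0 < z ^ (p-1) := Real.rpow_pos_of_pos hz0 _
    show |(p+1) * (p * z ^ (p-1))| ≤ 8
    rw [abs_of_nonneg (by positivity)]
    have h1 : 0 ≤ (1 - p) * z ^ (p-1) := mul_nonneg (by linarith) hpos.le
    have h2 : 0 ≤ (1 - p) * (p * z ^ (p-1)) :=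
      mul_nonneg (by linarith) (mul_nonneg hp0.le hpos.le)
    nlinarith [h1, h2, e3, hpos.le, hp0.le]
  exact mvt_bound hder hbd

lemma key {p : ℝ} (hp0 : 0 < p) (hp1 : p ≤ 4/5) (b c : ℝ) :
    |Gp p (1+b+c) - Gp p (1+b) - Gp p (1+c) + Gp p 1|
      ≤ 10 * |b| ^ ((p+1)/2) * |c| := by
  have hp1' : p ≤ 1 := by linarith
  rcases eq_or_ne b 0 with rfl | hbne
  · have h0 : Gp p (1+0+c) - Gp p (1+0) - Gp p (1+c) + Gp p 1 = 0 := by norm_num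
    rw [h0, abs_zero]
    positivity
  rcases eq_or_ne c 0 with rfl | hcne
  · have h0 : Gp p (1+b+0) - Gp p (1+b) - Gp p (1+0) + Gp p 1 = 0 := by norm_num
    rw [h0, abs_zero]
    positivity
  have hbabs : (0:ℝ) < |b| := abs_pos.mpr hbne
  -- the derivative function
  set f' : ℝ → ℝ := fun x => (p+1) * |x| ^ p with hf'
  rcases le_or_gt (1/10 : ℝ) |b| with hb | hb
  · -- Case 1 : |b| ≥ 1/10, MVT in c
    have hg : ∀ t ∈ uIcc (0:ℝ) c, HasDerivAt (fun t => Gp p (1+b+t) - Gp p (1+t))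
        (f' (1+b+t) - f' (1+t)) t := by
      intro t _
      have h1 : HasDerivAt (fun t : ℝ => Gp p (1+b+t)) (f' (1+b+t)) t := by
        have hin : HasDerivAt (fun t : ℝ => 1+b+t) 1 t := (hasDerivAt_id t).const_add (1+b)
        have := (hasDerivAt_G hp0 (1+b+t)).comp t hin
        simpa [Gp, Function.comp_def, hf'] using this
      have h2 : HasDerivAt (fun t : ℝ => Gp p (1+t)) (f' (1+t)) t := by
        have hin : HasDerivAt (fun t : ℝ => 1+t) 1 t := (hasDerivAt_id t).const_add 1
        have := (hasDerivAt_G hp0 (1+t)).comp t hin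
        simpa [Gp, Function.comp_def, hf'] using this
      exact h1.sub h2
    have hC : ∀ t ∈ uIcc (0:ℝ) c, |f' (1+b+t) - f' (1+t)| ≤ (p+1) * |b| ^ p := by
      intro t _
      have h := abs_rpow_sub_abs_rpow hp0 hp1' (1+b+t) (1+t)
      have heq : (1+b+t) - (1+t) = b := by ring
      rw [heq] at h
      calc |f' (1+b+t) - f' (1+t)| = (p+1) * |(|1+b+t| ^ p - |1+t| ^ p)| := by
            rw [hf']; rw [← mul_sub, abs_mul, abs_of_pos (by linarith : (0:ℝ) < p+1)]
      _ ≤ (p+1) * |b| ^ p := by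
            apply mul_le_mul_of_nonneg_left h (by linarith)
    have hm := mvt_bound hg hC
    simp only [add_zero, sub_zero] at hm
    have heq : Gp p (1+b+c) - Gp p (1+b) - Gp p (1+c) + Gp p 1
        = Gp p (1+b+c) - Gp p (1+c) - (Gp p (1+b) - Gp p 1) := by ring
    rw [heq]
    refine hm.trans ?_
    -- (p+1) * |b|^p * |c| ≤ 10 * |b|^((p+1)/2) * |c|
    have hsplit : |b| ^ ((p+1)/2) = |b| ^ p * |b| ^ ((1-p)/2) := by
      rw [← Real.rpow_add hbabs]; congr 1; ring
    have hlow : (1/5 : ℝ) ≤ |b| ^ ((1-p)/2) := by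
      rcases le_or_gt 1 |b| with h1 | h1
      · calc (1/5 : ℝ) ≤ 1 := by norm_num
        _ = |b| ^ (0:ℝ) := (Real.rpow_zero _).symm
        _ ≤ |b| ^ ((1-p)/2) := Real.rpow_le_rpow_of_exponent_le h1 (by linarith)
      · have h25 : ((1:ℝ)/25) ^ ((1:ℝ)/2) = 1/5 := by
          have he : ((1:ℝ)/25) = ((1:ℝ)/5) ^ (2:ℝ) := by
            rw [show (2:ℝ) = ((2:ℕ):ℝ) from by norm_num, Real.rpow_natCast]
            norm_num
          rw [he, ← Real.rpow_mul (by norm_num)]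
          norm_num
        calc (1/5 : ℝ) = ((1:ℝ)/25) ^ ((1:ℝ)/2) := h25.symm
        _ ≤ |b| ^ ((1:ℝ)/2) := Real.rpow_le_rpow (by norm_num) (by linarith) (by norm_num)
        _ ≤ |b| ^ ((1-p)/2) := Real.rpow_le_rpow_of_exponent_ge hbabs h1.le (by linarith)
    have hbp : (0:ℝ) < |b| ^ p := Real.rpow_pos_of_pos hbabs _
    have hc0 : (0:ℝ) ≤ |c| := abs_nonneg c
    have h5 : p + 1 ≤ 10 * |b| ^ ((1-p)/2) := by linarith
    have h6 : (p+1) * (|b| ^ p * |c|) ≤ (10 * |b| ^ ((1-p)/2)) * (|b| ^ p * |c|) :=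
      mul_le_mul_of_nonneg_right h5 (by positivity)
    calc (p+1) * |b| ^ p * |c| = (p+1) * (|b| ^ p * |c|) := by ring
    _ ≤ (10 * |b| ^ ((1-p)/2)) * (|b| ^ p * |c|) := h6
    _ = 10 * (|b| ^ p * |b| ^ ((1-p)/2)) * |c| := by ring
    _ = 10 * |b| ^ ((p+1)/2) * |c| := by rw [← hsplit]
  · -- |b| < 1/10 : MVT in b
    have hble : |b| ≤ 1/10 := hb.le
    have hg : ∀ s ∈ uIcc (0:ℝ) b, HasDerivAt (fun s => Gp p (1+s+c) - Gp p (1+s))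
        (f' (1+s+c) - f' (1+s)) s := by
      intro s _
      have h1 : HasDerivAt (fun s : ℝ => Gp p (1+s+c)) (f' (1+s+c)) s := by
        have hin : HasDerivAt (fun s : ℝ => 1+s+c) 1 s :=
          ((hasDerivAt_id s).const_add 1).add_const c
        have := (hasDerivAt_G hp0 (1+s+c)).comp s hin
        simpa [Gp, Function.comp_def, hf'] using this
      have h2 : HasDerivAt (fun s : ℝ => Gp p (1+s)) (f' (1+s)) s := by
        have hin : HasDerivAt (fun s : ℝ => 1+s) 1 s := (hasDerivAt_id s).const_add 1
        have := (hasDerivAt_G hp0 (1+s)).comp s hin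
        simpa [Gp, Function.comp_def, hf'] using this
      exact h1.sub h2
    have hbe2 : |b| ≤ |b| ^ ((p+1)/2) := by
      calc |b| = |b| ^ (1:ℝ) := (Real.rpow_one _).symm
      _ ≤ |b| ^ ((p+1)/2) := Real.rpow_le_rpow_of_exponent_ge hbabs (by linarith) (by linarith)
    have heq : Gp p (1+b+c) - Gp p (1+b) - Gp p (1+c) + Gp p 1
        = Gp p (1+b+c) - Gp p (1+b) - (Gp p (1+c) - Gp p 1) := by ring
    rcases le_or_gt (1/2 : ℝ) |c| with hc | hc
    · -- Case 2 : |c| ≥ 1/2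
      have hC : ∀ s ∈ uIcc (0:ℝ) b, |f' (1+s+c) - f' (1+s)| ≤ 4 * |c| := by
        intro s _
        have h := abs_rpow_sub_abs_rpow hp0 hp1' (1+s+c) (1+s)
        have heq2 : (1+s+c) - (1+s) = c := by ring
        rw [heq2] at h
        have hcp : |c| ^ p ≤ 2 * |c| := by
          rcases le_or_gt 1 |c| with h1 | h1
          · calc |c| ^ p ≤ |c| ^ (1:ℝ) := Real.rpow_le_rpow_of_exponent_le h1 hp1'
            _ = |c| := Real.rpow_one _
            _ ≤ 2 * |c| := by linarith
          · calc |c| ^ p ≤ 1 := Real.rpow_le_one (abs_nonneg c) h1.le hp0.le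
            _ ≤ 2 * |c| := by linarith
        calc |f' (1+s+c) - f' (1+s)| = (p+1) * |(|1+s+c| ^ p - |1+s| ^ p)| := by
              rw [hf']; rw [← mul_sub, abs_mul, abs_of_pos (by linarith : (0:ℝ) < p+1)]
        _ ≤ (p+1) * |c| ^ p := mul_le_mul_of_nonneg_left h (by linarith)
        _ ≤ 4 * |c| := by nlinarith [abs_nonneg c, Real.rpow_nonneg (abs_nonneg c) p]
      have hm := mvt_bound hg hC
      simp only [add_zero, zero_add, sub_zero] at hm
      rw [heq]
      refine hm.trans ?_
      have hc0 : (0:ℝ) ≤ |c| := abs_nonneg c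
      have h6 : 4 * |c| * |b| ≤ 4 * |c| * |b| ^ ((p+1)/2) :=
        mul_le_mul_of_nonneg_left hbe2 (by positivity)
      have h7 : (0:ℝ) ≤ |b| ^ ((p+1)/2) * |c| := by positivity
      nlinarith [h6, h7]
    · -- Case 3 : |b| ≤ 1/10, |c| ≤ 1/2
      have hcle : |c| ≤ 1/2 := hc.le
      have hcc := abs_le.mp hcle
      have hC : ∀ s ∈ uIcc (0:ℝ) b, |f' (1+s+c) - f' (1+s)| ≤ 8 * |c| := by
        intro s hs
        have hsb : |s| ≤ |b| := by
          rcases Set.mem_uIcc.mp hs with ⟨h1, h2⟩ | ⟨h1, h2⟩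
          · rw [abs_of_nonneg h1]; exact h2.trans (le_abs_self b)
          · rw [abs_of_nonpos h2]; linarith [neg_le_abs b]
        have hss := abs_le.mp (hsb.trans hble)
        have hmem1 : (1+s+c) ∈ Icc (2/5 : ℝ) (8/5) := by
          constructor <;> [linarith; linarith]
        have hmem2 : (1+s) ∈ Icc (2/5 : ℝ) (8/5) := by
          constructor <;> [linarith; linarith]
        have h := lip_fprime hp0 hp1' hmem1 hmem2
        have heq2 : (1+s+c) - (1+s) = c := by ring
        rw [heq2] at h
        exact h
      have hm := mvt_bound hg hC
      simp only [add_zero, zero_add, sub_zero] at hm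
      rw [heq]
      refine hm.trans ?_
      have hc0 : (0:ℝ) ≤ |c| := abs_nonneg c
      have h6 : 8 * |c| * |b| ≤ 8 * |c| * |b| ^ ((p+1)/2) :=
        mul_le_mul_of_nonneg_left hbe2 (by positivity)
      have h7 : (0:ℝ) ≤ |b| ^ ((p+1)/2) * |c| := by positivity
      nlinarith [h6, h7]

lemma Gp_neg (p x : ℝ) : Gp p (-x) = - Gp p x := by
  simp only [Gp, abs_neg]; ring

lemma Gp_scale {p : ℝ} (hp : 0 < p) {a : ℝ} (ha : 0 < a) (x : ℝ) :
    Gp p (a * x) = a ^ (p+1) * Gp p x := by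
  simp only [Gp, abs_mul, abs_of_pos ha]
  rw [Real.mul_rpow ha.le (abs_nonneg x), Real.rpow_add_one ha.ne']
  ring

lemma main_pos {p : ℝ} (hp0 : 0 < p) (hp1 : p ≤ 4/5) {a : ℝ} (ha : 0 < a) (b c : ℝ) :
    |Gp p (a+b+c) - Gp p (a+b) - Gp p (a+c) + Gp p a|
      ≤ 10 * a ^ ((p-1)/2) * |b| ^ ((p+1)/2) * |c| := by
  have h := key hp0 hp1 (b/a) (c/a)
  have hA : (0:ℝ) < a ^ (p+1) := Real.rpow_pos_of_pos ha _
  have h2 := mul_le_mul_of_nonneg_left h hA.le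
  have e1 : a * (1 + b/a + c/a) = a+b+c := by field_simp
  have e2 : a * (1 + b/a) = a+b := by field_simp
  have e3 : a * (1 + c/a) = a+c := by field_simp
  have g1 : Gp p (a+b+c) = a ^ (p+1) * Gp p (1+b/a+c/a) := by
    rw [← e1, Gp_scale hp0 ha]
  have g2 : Gp p (a+b) = a ^ (p+1) * Gp p (1+b/a) := by
    rw [← e2, Gp_scale hp0 ha]
  have g3 : Gp p (a+c) = a ^ (p+1) * Gp p (1+c/a) := by
    rw [← e3, Gp_scale hp0 ha]
  have g4 : Gp p a = a ^ (p+1) * Gp p 1 := by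
    conv_lhs => rw [← mul_one a]
    rw [Gp_scale hp0 ha]
  have eL : a ^ (p+1) * |Gp p (1+b/a+c/a) - Gp p (1+b/a) - Gp p (1+c/a) + Gp p 1|
      = |Gp p (a+b+c) - Gp p (a+b) - Gp p (a+c) + Gp p a| := by
    have hmm : a ^ (p+1) * (Gp p (1+b/a+c/a) - Gp p (1+b/a) - Gp p (1+c/a) + Gp p 1)
        = Gp p (a+b+c) - Gp p (a+b) - Gp p (a+c) + Gp p a := by
      rw [g1, g2, g3, g4]; ring
    rw [← hmm, abs_mul, abs_of_pos hA]
  have hb : |b/a| = |b|/a := by rw [abs_div, abs_of_pos ha]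
  have hc : |c/a| = |c|/a := by rw [abs_div, abs_of_pos ha]
  have hsplit : a ^ (p+1) = a ^ ((p-1)/2) * a ^ ((p+1)/2) * a := by
    rw [← Real.rpow_add ha, ← Real.rpow_add_one ha.ne']
    congr 1; ring
  have hA2 : (0:ℝ) < a ^ ((p+1)/2) := Real.rpow_pos_of_pos ha _
  have eR : a ^ (p+1) * (10 * |b/a| ^ ((p+1)/2) * |c/a|)
      = 10 * a ^ ((p-1)/2) * |b| ^ ((p+1)/2) * |c| := by
    rw [hb, hc, Real.div_rpow (abs_nonneg b) ha.le, hsplit]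
    field_simp
  rw [eL, eR] at h2
  exact h2


/-- The energy-critical nonlinearity `F(σ) = |σ|^{4/(N-2)} σ`. -/
noncomputable def F (N : ℕ) (s : ℝ) : ℝ := |s| ^ ((4 : ℝ) / ((N : ℝ) - 2)) * s

theorem pointwise_second_difference_F (N : ℕ) (hN : 7 ≤ N) :
    ∃ C > 0, ∀ a b c : ℝ, a ≠ 0 →
      |F N (a + b + c) - F N (a + b) - F N (a + c) + F N a|
        ≤ C * |a| ^ (((6 : ℝ) - (N : ℝ)) / (2 * ((N : ℝ) - 2)))
            * |b| ^ (((N : ℝ) + 2) / (2 * ((N : ℝ) - 2))) * |c| := by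
  have hN7 : (7:ℝ) ≤ (N:ℝ) := by exact_mod_cast hN
  have hd : (0:ℝ) < (N:ℝ) - 2 := by linarith
  set p : ℝ := 4 / ((N:ℝ) - 2) with hp
  have hp0 : 0 < p := by rw [hp]; positivity
  have hp1 : p ≤ 4/5 := by
    rw [hp, div_le_div_iff₀ hd (by norm_num)]
    linarith
  have he1 : ((6:ℝ) - (N:ℝ)) / (2 * ((N:ℝ) - 2)) = (p-1)/2 := by
    rw [hp]; field_simp; ring
  have he2 : ((N:ℝ) + 2) / (2 * ((N:ℝ) - 2)) = (p+1)/2 := by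
    rw [hp]; field_simp; ring
  have hF : F N = Gp p := by
    funext s; simp [F, Gp, hp]
  refine ⟨10, by norm_num, ?_⟩
  intro a b c ha
  rw [he1, he2, hF]
  rcases ha.lt_or_gt with hneg | hpos
  · have h := main_pos hp0 hp1 (show (0:ℝ) < -a by linarith) (-b) (-c)
    rw [show -a + -b + -c = -(a+b+c) by ring, show -a + -b = -(a+b) by ring,
      show -a + -c = -(a+c) by ring, Gp_neg, Gp_neg, Gp_neg, Gp_neg,
      show -Gp p (a+b+c) - -Gp p (a+b) - -Gp p (a+c) + -Gp p a
        = -(Gp p (a+b+c) - Gp p (a+b) - Gp p (a+c) + Gp p a) by ring,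
      abs_neg, abs_neg, abs_neg] at h
    rw [abs_of_neg hneg]
    exact h
  · have h := main_pos hp0 hp1 hpos b c
    rw [abs_of_pos hpos]
    exact h
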